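/- arXiv:2405.13765 — 5 statements merged into one kernel-verified Lean document; each statement's English description precedes it below -/
import Mathlib

section
/- Consider the high-order tuner iteration on ℝ^N: xₜ = βₜ zₜ + (1 - βₜ) yₜ, yₜ₊₁ = xₜ - (μₜ/Nₜ)∇fₜ(xₜ), zₜ₊₁ = zₜ - (γₜ/Nₜ)∇fₜ(xₜ), where each fₜ is convex and Lₜ-smooth with common minimizer x*, Nₜ ≥ Lₜ > 0, βₜ ∈ [0,1), μₜ ∈ (0,1], and γₜ = μₜ/2. Then the Lyapunov candidate Vₜ = ‖zₜ - x*‖² + ‖yₜ - zₜ‖² satisfies Vₜ₊₁ - Vₜ ≤ 2(γₜ/Nₜ)(fₜ(x*) - fₜ(xₜ)) ≤ 0. -/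
open scoped RealInnerProductSpace

section Helpers

variable {E : Type*} [NormedAddCommGroup E] [InnerProductSpace ℝ E] [CompleteSpace E]

lemma hasDerivAt_line {f : E → ℝ} {g : E} (p v : E) (s : ℝ)
    (hg : HasGradientAt f g (s • v + p)) :
    HasDerivAt (fun s : ℝ => f (s • v + p)) ⟪g, v⟫ s := by
  have hc1 : HasDerivAt (fun s : ℝ => s • v + p) v s := by
    simpa using ((hasDerivAt_id s).smul_const v).add_const p
  have := (hg.hasFDerivAt).comp_hasDerivAt s hc1
  exact this

lemma conv_grad {f : E → ℝ} {g p : E} (hc : ConvexOn ℝ Set.univ f)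
    (hg : HasGradientAt f g p) (w : E) : f p + ⟪g, w - p⟫ ≤ f w := by
  have hφ : ConvexOn ℝ Set.univ (fun s : ℝ => f (s • (w - p) + p)) := by
    exact
      hc.comp_affineMap (AffineMap.lineMap p w)
  have hd : HasDerivAt (fun s : ℝ => f (s • (w - p) + p)) ⟪g, w - p⟫ 0 := by
    apply hasDerivAt_line
    simpa using hg
  have := hφ.le_slope_of_hasDerivAt (Set.mem_univ (0:ℝ)) (Set.mem_univ (1:ℝ)) one_pos hd
  rw [slope_def_field] at this
  simp only [one_smul, zero_smul, zero_add, sub_zero, div_one, sub_add_cancel] at this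
  linarith

lemma descent {f : E → ℝ} {g : E → E} {L : ℝ} (hL : 0 < L)
    (hg : ∀ p, HasGradientAt f (g p) p)
    (hlip : ∀ p q, ‖g p - g q‖ ≤ L * ‖p - q‖) (v w : E) :
    f w ≤ f v + ⟪g v, w - v⟫ + L / 2 * ‖w - v‖ ^ 2 := by
  set c : ℝ → E := fun s => s • (w - v) + v with hc
  set h : ℝ → ℝ := fun s =>
    f (c s) - s * ⟪g v, w - v⟫ - L / 2 * ‖w - v‖ ^ 2 * s ^ 2 with hh
  have hder : ∀ s : ℝ,
      HasDerivAt h (⟪g (c s), w - v⟫ - ⟪g v, w - v⟫ - L * ‖w - v‖ ^ 2 * s) s := by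
    intro s
    have h1 : HasDerivAt (fun s : ℝ => f (c s)) ⟪g (c s), w - v⟫ s :=
      hasDerivAt_line v (w - v) s (hg _)
    have h2 : HasDerivAt (fun s : ℝ => s * ⟪g v, w - v⟫) ⟪g v, w - v⟫ s := by
      simpa using (hasDerivAt_id s).mul_const ⟪g v, w - v⟫
    have h3 : HasDerivAt (fun s : ℝ => L / 2 * ‖w - v‖ ^ 2 * s ^ 2)
        (L / 2 * ‖w - v‖ ^ 2 * (2 * s)) s := by
      simpa using (hasDerivAt_pow 2 s).const_mul (L / 2 * ‖w - v‖ ^ 2)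
    have := (h1.sub h2).sub h3
    rw [show ⟪g (c s), w - v⟫ - ⟪g v, w - v⟫ - L * ‖w - v‖ ^ 2 * s
        = ⟪g (c s), w - v⟫ - ⟪g v, w - v⟫ - L / 2 * ‖w - v‖ ^ 2 * (2 * s) by ring]
    exact this
  have hmono : AntitoneOn h (Set.Icc 0 1) := by
    apply antitoneOn_of_deriv_nonpos (convex_Icc 0 1)
    · intro s _
      exact (hder s).differentiableAt.continuousAt.continuousWithinAt
    · intro s _
      exact (hder s).differentiableAt.differentiableWithinAt
    · intro s hs
      rw [interior_Icc] at hs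
      rw [(hder s).deriv]
      have hb1 : ⟪g (c s) - g v, w - v⟫ ≤ ‖g (c s) - g v‖ * ‖w - v‖ :=
        real_inner_le_norm _ _
      have hb2 : ‖g (c s) - g v‖ ≤ L * (s * ‖w - v‖) := by
        have := hlip (c s) v
        simpa [hc, abs_of_pos hs.1, norm_smul] using this
      have hn : (0:ℝ) ≤ ‖w - v‖ := norm_nonneg _
      have : ⟪g (c s), w - v⟫ - ⟪g v, w - v⟫ ≤ L * (s * ‖w - v‖) * ‖w - v‖ := by
        rw [← inner_sub_left]
        calc ⟪g (c s) - g v, w - v⟫ ≤ ‖g (c s) - g v‖ * ‖w - v‖ := hb1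
          _ ≤ L * (s * ‖w - v‖) * ‖w - v‖ := by
              apply mul_le_mul_of_nonneg_right hb2 hn
      nlinarith
  have h10 : h 1 ≤ h 0 := hmono (Set.left_mem_Icc.2 zero_le_one)
    (Set.right_mem_Icc.2 zero_le_one) zero_le_one
  simp only [hh, hc, one_smul, zero_smul, zero_add, sub_add_cancel, one_pow, mul_one,
    zero_mul, sub_zero, one_mul, ne_eq, OfNat.ofNat_ne_zero, not_false_eq_true, zero_pow,
    mul_zero] at h10
  linarith

end Helpers

set_option maxHeartbeats 1600000 in
theorem stmt_6 (N : ℕ)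
    (f : ℕ → EuclideanSpace ℝ (Fin N) → ℝ)
    (f' : ℕ → EuclideanSpace ℝ (Fin N) → EuclideanSpace ℝ (Fin N))
    (x y z : ℕ → EuclideanSpace ℝ (Fin N))
    (xstar : EuclideanSpace ℝ (Fin N))
    (L Nt β μ γ : ℕ → ℝ)
    (hgrad : ∀ t w, HasGradientAt (f t) (f' t w) w)
    (hconv : ∀ t, ConvexOn ℝ Set.univ (f t))
    (hsmooth : ∀ t w v, ‖f' t w - f' t v‖ ≤ L t * ‖w - v‖)
    (hmin : ∀ t w, f t xstar ≤ f t w)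
    (hL : ∀ t, 0 < L t) (hN : ∀ t, L t ≤ Nt t)
    (hβ : ∀ t, β t ∈ Set.Ico (0 : ℝ) 1)
    (hμ : ∀ t, μ t ∈ Set.Ioc (0 : ℝ) 1)
    (hγ : ∀ t, γ t = μ t / 2)
    (hx : ∀ t, x t = β t • z t + (1 - β t) • y t)
    (hy : ∀ t, y (t + 1) = x t - (μ t / Nt t) • f' t (x t))
    (hz : ∀ t, z (t + 1) = z t - (γ t / Nt t) • f' t (x t)) :
    ∀ t, (‖z (t + 1) - xstar‖ ^ 2 + ‖y (t + 1) - z (t + 1)‖ ^ 2)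
          - (‖z t - xstar‖ ^ 2 + ‖y t - z t‖ ^ 2)
        ≤ 2 * (γ t / Nt t) * (f t xstar - f t (x t)) ∧
      2 * (γ t / Nt t) * (f t xstar - f t (x t)) ≤ 0 := by
  intro t
  have hNt : 0 < Nt t := (hL t).trans_le (hN t)
  set a : ℝ := γ t / Nt t with ha_def
  have ha : 0 < a := div_pos (by rw [hγ]; linarith [(hμ t).1]) hNt
  have haL : 2 * a * L t ≤ 1 := by
    have h1 : μ t * L t ≤ Nt t := by nlinarith [(hμ t).1, (hμ t).2, hL t, hN t]
    have h2 : 2 * a * L t = μ t * L t / Nt t := by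
      rw [ha_def, hγ]; field_simp
    rw [h2, div_le_one hNt]; exact h1
  set g : EuclideanSpace ℝ (Fin N) := f' t (x t) with hg_def
  set u : EuclideanSpace ℝ (Fin N) := z t - xstar with hu_def
  set w : EuclideanSpace ℝ (Fin N) := y t - z t with hw_def
  set b : ℝ := 1 - β t with hb_def
  clear_value a g u w b
  -- gradient at the minimizer vanishes
  have hstar : f' t xstar = 0 := by
    have h0 : IsLocalMin (f t) xstar := Filter.Eventually.of_forall (hmin t)
    have h1 := h0.hasFDerivAt_eq_zero (hgrad t xstar).hasFDerivAt
    exact (InnerProductSpace.toDual ℝ (EuclideanSpace ℝ (Fin N))).map_eq_zero_iff.mp h1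
  -- the key inequality
  have hkey : f t (x t) + ⟪g, xstar - x t⟫ + 1 / (2 * L t) * ‖g‖ ^ 2 ≤ f t xstar := by
    set d : ℝ := (L t)⁻¹ with hd_def
    set w0 : EuclideanSpace ℝ (Fin N) := xstar + d • g with hw0_def
    clear_value d w0
    have hA : f t (x t) + ⟪g, w0 - x t⟫ ≤ f t w0 := by
      rw [hg_def]; exact conv_grad (hconv t) (hgrad t (x t)) w0
    have hB : f t w0 ≤ f t xstar + ⟪f' t xstar, w0 - xstar⟫ + L t / 2 * ‖w0 - xstar‖ ^ 2 :=
      descent (hL t) (hgrad t) (hsmooth t) xstar w0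
    have hB' : f t w0 ≤ f t xstar + L t / 2 * (d ^ 2 * ‖g‖ ^ 2) := by
      have e1 : w0 - xstar = d • g := by rw [hw0_def]; abel
      have e2 : ‖w0 - xstar‖ ^ 2 = d ^ 2 * ‖g‖ ^ 2 := by
        rw [e1, norm_smul, Real.norm_eq_abs, mul_pow, sq_abs]
      rw [hstar] at hB
      simpa [e2] using hB
    have e3 : ⟪g, w0 - x t⟫ = ⟪g, xstar - x t⟫ + d * ‖g‖ ^ 2 := by
      have : w0 - x t = (xstar - x t) + d • g := by rw [hw0_def]; abel
      rw [this, inner_add_right, real_inner_smul_right, real_inner_self_eq_norm_sq]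
    have hA' : f t (x t) + (⟪g, xstar - x t⟫ + d * ‖g‖ ^ 2) ≤ f t w0 := by
      rw [← e3]; exact hA
    have hfin : d * ‖g‖ ^ 2 - L t / 2 * (d ^ 2 * ‖g‖ ^ 2) = 1 / (2 * L t) * ‖g‖ ^ 2 := by
      have hL0 : L t ≠ 0 := (hL t).ne'
      rw [hd_def]; field_simp; ring
    linarith
  -- algebraic expansion
  have expand : ∀ (c : ℝ) (p q : EuclideanSpace ℝ (Fin N)),
      ‖p - c • q‖ ^ 2 = ‖p‖ ^ 2 - 2 * c * ⟪p, q⟫ + c ^ 2 * ‖q‖ ^ 2 := by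
    intro c p q
    rw [norm_sub_sq_real, real_inner_smul_right, norm_smul, Real.norm_eq_abs, mul_pow, sq_abs]
    ring
  have h2a : μ t / Nt t = 2 * a := by rw [ha_def, hγ]; ring
  have hz1 : z (t + 1) - xstar = u - a • g := by
    rw [hz, ← hg_def, hu_def, ha_def]; abel
  have hy1 : y (t + 1) - z (t + 1) = b • w - a • g := by
    rw [hy, hz, ← hg_def, hx t, h2a, hw_def, hb_def, ha_def]
    module
  have hxu : x t - xstar = u + b • w := by
    rw [hx, hu_def, hw_def, hb_def]; module
  have hE1 : ‖z (t + 1) - xstar‖ ^ 2 = ‖u‖ ^ 2 - 2 * a * ⟪u, g⟫ + a ^ 2 * ‖g‖ ^ 2 := by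
    rw [hz1]; exact expand a u g
  have hE2 : ‖y (t + 1) - z (t + 1)‖ ^ 2
      = b ^ 2 * ‖w‖ ^ 2 - 2 * a * (b * ⟪w, g⟫) + a ^ 2 * ‖g‖ ^ 2 := by
    rw [hy1, expand a (b • w) g, norm_smul, Real.norm_eq_abs, mul_pow, sq_abs,
      real_inner_smul_left]
  have hinner : ⟪u, g⟫ + b * ⟪w, g⟫ = ⟪g, x t - xstar⟫ := by
    rw [hxu, inner_add_right, real_inner_smul_right, real_inner_comm g u, real_inner_comm g w]
  have hkey' : f t (x t) - f t xstar + 1 / (2 * L t) * ‖g‖ ^ 2 ≤ ⟪g, x t - xstar⟫ := by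
    have : ⟪g, xstar - x t⟫ = -⟪g, x t - xstar⟫ := by
      rw [← inner_neg_right]; congr 1; abel
    linarith [hkey, this.le, this.ge]
  have hb1 : b ^ 2 ≤ 1 := by
    have h1 := (hβ t).1; have h2 := (hβ t).2
    rw [hb_def]; nlinarith
  have hw2 : (0:ℝ) ≤ ‖w‖ ^ 2 := sq_nonneg _
  have hg2 : (0:ℝ) ≤ ‖g‖ ^ 2 := sq_nonneg _
  have hLt := hL t
  have hfmin := hmin t (x t)
  constructor
  · rw [hE1, hE2]
    have h2aL : 2 * a ≤ 1 / L t := by rw [le_div_iff₀ hLt]; linarith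
    have hq : 2 * a ^ 2 * ‖g‖ ^ 2 ≤ a * (1 / L t) * ‖g‖ ^ 2 := by
      have hp : 0 ≤ (a * ‖g‖ ^ 2) * (1 / L t - 2 * a) :=
        mul_nonneg (mul_nonneg ha.le hg2) (sub_nonneg.2 h2aL)
      nlinarith [hp]
    have hs : 2 * a * (f t (x t) - f t xstar + 1 / (2 * L t) * ‖g‖ ^ 2)
        ≤ 2 * a * ⟪g, x t - xstar⟫ :=
      mul_le_mul_of_nonneg_left hkey' (by linarith)
    have hs2 : 2 * a * (1 / (2 * L t)) = a * (1 / L t) := by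
      field_simp
    have hs' : 2 * a * (f t (x t) - f t xstar) + a * (1 / L t) * ‖g‖ ^ 2
        ≤ 2 * a * ⟪g, x t - xstar⟫ := by
      have e : 2 * a * (f t (x t) - f t xstar + 1 / (2 * L t) * ‖g‖ ^ 2)
          = 2 * a * (f t (x t) - f t xstar) + (2 * a * (1 / (2 * L t))) * ‖g‖ ^ 2 := by
        ring
      rw [e, hs2] at hs
      exact hs
    have hin2 : 2 * a * ⟪g, x t - xstar⟫ = 2 * a * ⟪u, g⟫ + 2 * a * (b * ⟪w, g⟫) := by
      rw [← hinner]; ring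
    have hbw : (b ^ 2 - 1) * ‖w‖ ^ 2 ≤ 0 := by
      have := mul_le_mul_of_nonneg_right (sub_nonpos.2 hb1) hw2
      simpa using this
    linarith [hs', hin2, hq, hbw]
  · have hd0 : f t xstar - f t (x t) ≤ 0 := by linarith
    have := mul_le_mul_of_nonneg_left hd0 (show (0:ℝ) ≤ 2 * a by linarith)
    simpa using this
end

section
/- Under the assumptions of the previous high-order tuner statement (convex Lₜ-smooth fₜ with common minimizer x*, Nₜ ≥ Lₜ, βₜ ∈ [0,1), μₜ ∈ [ε,1] for fixed ε > 0, γₜ = μₜ/2), and additionally assuming the sequence Nₜ is bounded by N̄ < ∞, the partial sums aₜ = Σ_{s=0}^{t} (f_s(x_s) - f_s(x*)) satisfy aₜ ≤ (N̄/ε) V₀ for all t, where V₀ = ‖z₀ - x*‖² + ‖y₀ - z₀‖². Consequently fₜ(xₜ) - fₜ(x*) → 0 as t → ∞. -/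
open scoped RealInnerProductSpace
open Filter Set

variable {E : Type*} [NormedAddCommGroup E] [InnerProductSpace ℝ E] [CompleteSpace E]

/-- derivative along a line -/
lemma ht_line {f : E → ℝ} {g : E → E} (hg : ∀ w, HasGradientAt f (g w) w) (a u : E) (t : ℝ) :
    HasDerivAt (fun s : ℝ => f (a + s • u)) ⟪g (a + t • u), u⟫ t := by
  have hc : HasDerivAt (fun s : ℝ => a + s • u) u t := by
    simpa using ((hasDerivAt_id t).smul_const u).const_add a
  have := (hg (a + t • u)).hasFDerivAt.comp_hasDerivAt t hc
  exact this

/-- convex gradient inequality -/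
lemma ht_convex_ineq {f : E → ℝ} {g : E → E} (hg : ∀ w, HasGradientAt f (g w) w)
    (hconv : ConvexOn ℝ Set.univ f) (a b : E) :
    f a + ⟪g a, b - a⟫ ≤ f b := by
  set φ : ℝ → ℝ := fun s => f (a + s • (b - a)) with hφ
  have hφconv : ConvexOn ℝ Set.univ φ := by
    have := hconv.comp_affineMap (AffineMap.lineMap a b : ℝ →ᵃ[ℝ] E)
    simp only [Set.preimage_univ] at this
    have heq : φ = f ∘ (AffineMap.lineMap a b : ℝ →ᵃ[ℝ] E) := by
      funext s
      simp [φ, AffineMap.lineMap_apply, add_comm]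
    rw [heq]
    exact this
  have hd : HasDerivAt φ ⟪g a, b - a⟫ 0 := by
    have := ht_line hg a (b - a) 0
    simpa using this
  have hslope := hφconv.le_slope_of_hasDerivAt (Set.mem_univ 0) (Set.mem_univ 1) one_pos hd
  have h0 : φ 0 = f a := by simp [φ]
  have h1 : φ 1 = f b := by simp [φ]
  rw [slope_def_field, h0, h1] at hslope
  simp at hslope
  linarith

/-- descent lemma -/
lemma ht_descent {f : E → ℝ} {g : E → E} {L : ℝ} (hL : 0 < L)
    (hg : ∀ w, HasGradientAt f (g w) w)
    (hsmooth : ∀ w v, ‖g w - g v‖ ≤ L * ‖w - v‖) (a b : E) :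
    f b ≤ f a + ⟪g a, b - a⟫ + L / 2 * ‖b - a‖ ^ 2 := by
  set u : E := b - a with hu
  set ψ : ℝ → ℝ := fun s => f (a + s • u) - ⟪g a, u⟫ * s - (L / 2 * ‖u‖ ^ 2) * s ^ 2 with hψ
  have hd : ∀ s : ℝ, HasDerivAt ψ (⟪g (a + s • u), u⟫ - ⟪g a, u⟫ - L * s * ‖u‖ ^ 2) s := by
    intro s
    have h1 := ht_line hg a u s
    have h2 : HasDerivAt (fun s : ℝ => ⟪g a, u⟫ * s) ⟪g a, u⟫ s := by
      simpa using (hasDerivAt_id s).const_mul ⟪g a, u⟫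
    have h3 : HasDerivAt (fun s : ℝ => (L / 2 * ‖u‖ ^ 2) * s ^ 2)
        ((L / 2 * ‖u‖ ^ 2) * (2 * s)) s := by
      simpa using (hasDerivAt_pow 2 s).const_mul (L / 2 * ‖u‖ ^ 2)
    have := (h1.sub h2).sub h3
    exact this.congr_deriv (by ring)
  have hanti : AntitoneOn ψ (Set.Icc 0 1) := by
    apply antitoneOn_of_deriv_nonpos (convex_Icc 0 1)
    · exact fun s _ => (hd s).differentiableAt.continuousAt.continuousWithinAt
    · exact fun s _ => (hd s).differentiableAt.differentiableWithinAt
    · intro s hs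
      rw [interior_Icc] at hs
      rw [(hd s).deriv]
      have hin : ⟪g (a + s • u) - g a, u⟫ ≤ L * s * ‖u‖ ^ 2 := by
        calc ⟪g (a + s • u) - g a, u⟫ ≤ ‖g (a + s • u) - g a‖ * ‖u‖ := real_inner_le_norm _ _
          _ ≤ (L * ‖(a + s • u) - a‖) * ‖u‖ := by
              have := hsmooth (a + s • u) a
              nlinarith [norm_nonneg u]
          _ = L * s * ‖u‖ ^ 2 := by
              rw [add_sub_cancel_left, norm_smul, Real.norm_eq_abs, abs_of_pos hs.1]
              ring
      rw [inner_sub_left] at hin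
      linarith
  have h01 := hanti (Set.mem_Icc.mpr ⟨le_refl 0, zero_le_one⟩)
    (Set.mem_Icc.mpr ⟨zero_le_one, le_refl 1⟩) zero_le_one
  have h0 : ψ 0 = f a := by simp [ψ]
  have h1 : ψ 1 = f b - ⟪g a, u⟫ - L / 2 * ‖u‖ ^ 2 := by simp [ψ, hu]
  rw [h0, h1] at h01
  linarith

/-- shifted function gradient -/
lemma ht_shift_grad {f : E → ℝ} {g : E → E} (hg : ∀ w, HasGradientAt f (g w) w) (v : E) :
    ∀ w, HasGradientAt (fun w => f w - ⟪v, w⟫) (g w - v) w := by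
  intro w
  have h1 : HasFDerivAt (fun w : E => ⟪v, w⟫) (InnerProductSpace.toDual ℝ E v) w :=
    (InnerProductSpace.toDual ℝ E v).hasFDerivAt
  have h2 := (hg w).hasFDerivAt.sub h1
  have h3 : InnerProductSpace.toDual ℝ E (g w) - InnerProductSpace.toDual ℝ E v
      = InnerProductSpace.toDual ℝ E (g w - v) := (map_sub _ _ _).symm
  rw [h3] at h2
  have h4 := h2.hasGradientAt
  simp at h4
  exact h4

/-- shifted function convexity -/
lemma ht_shift_conv {f : E → ℝ} (hconv : ConvexOn ℝ Set.univ f) (v : E) :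
    ConvexOn ℝ Set.univ (fun w => f w - ⟪v, w⟫) := by
  refine ⟨convex_univ, fun p _ q _ α β hα hβ hab => ?_⟩
  have := hconv.2 (Set.mem_univ p) (Set.mem_univ q) hα hβ hab
  simp only [smul_eq_mul, inner_add_right, real_inner_smul_right] at *
  linarith

/-- key combined inequality -/
lemma ht_key {f : E → ℝ} {g : E → E} {L : ℝ} (hL : 0 < L)
    (hg : ∀ w, HasGradientAt f (g w) w) (hconv : ConvexOn ℝ Set.univ f)
    (hsmooth : ∀ w v, ‖g w - g v‖ ≤ L * ‖w - v‖) (a b : E) :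
    f a + ⟪g a, b - a⟫ + ‖g b - g a‖ ^ 2 / (2 * L) ≤ f b := by
  set φ : E → ℝ := fun w => f w - ⟪g a, w⟫ with hφ
  set φ' : E → E := fun w => g w - g a with hφ'
  have hgφ : ∀ w, HasGradientAt φ (φ' w) w := ht_shift_grad hg (g a)
  have hconvφ : ConvexOn ℝ Set.univ φ := ht_shift_conv hconv (g a)
  have hsφ : ∀ w v, ‖φ' w - φ' v‖ ≤ L * ‖w - v‖ := by
    intro w v; simpa [φ', sub_sub_sub_cancel_right] using hsmooth w v
  -- a is a global min of φ
  have hmin : ∀ v, φ a ≤ φ v := by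
    intro v
    have := ht_convex_ineq hgφ hconvφ a v
    simpa [φ', inner_sub_left] using this
  -- descent step from b
  have hdesc := ht_descent hL hgφ hsφ b (b - (1 / L) • φ' b)
  have he1 : (b - (1 / L) • φ' b) - b = -((1 / L) • φ' b) := by abel
  rw [he1] at hdesc
  have he2 : ⟪φ' b, -((1 / L) • φ' b)⟫ = -(1 / L) * ‖φ' b‖ ^ 2 := by
    rw [inner_neg_right, real_inner_smul_right, real_inner_self_eq_norm_sq]
    ring
  have he3 : ‖-((1 / L) • φ' b)‖ ^ 2 = (1 / L) ^ 2 * ‖φ' b‖ ^ 2 := by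
    rw [norm_neg, norm_smul, Real.norm_eq_abs, mul_pow, sq_abs]
  rw [he2, he3] at hdesc
  have hcomb := (hmin (b - (1 / L) • φ' b)).trans hdesc
  have hLne : L ≠ 0 := ne_of_gt hL
  have : φ a ≤ φ b - ‖φ' b‖ ^ 2 / (2 * L) := by
    have heq : φ b + -(1 / L) * ‖φ' b‖ ^ 2 + L / 2 * ((1 / L) ^ 2 * ‖φ' b‖ ^ 2)
        = φ b - ‖φ' b‖ ^ 2 / (2 * L) := by
      field_simp
      ring
    linarith [hcomb, heq.ge, heq.le]
  have hφa : φ a = f a - ⟪g a, a⟫ := rfl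
  have hφb : φ b = f b - ⟪g a, b⟫ := rfl
  rw [hφa, hφb] at this
  have hib : ⟪g a, b - a⟫ = ⟪g a, b⟫ - ⟪g a, a⟫ := inner_sub_right _ _ _
  simp only [hφ'] at this
  linarith
set_option maxHeartbeats 1600000 in
theorem stmt_7 (N : ℕ)
    (f : ℕ → EuclideanSpace ℝ (Fin N) → ℝ)
    (f' : ℕ → EuclideanSpace ℝ (Fin N) → EuclideanSpace ℝ (Fin N))
    (x y z : ℕ → EuclideanSpace ℝ (Fin N))
    (xstar : EuclideanSpace ℝ (Fin N))
    (L Nt β μ γ : ℕ → ℝ) (ε Nbar : ℝ) (hε : 0 < ε)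
    (hgrad : ∀ t w, HasGradientAt (f t) (f' t w) w)
    (hconv : ∀ t, ConvexOn ℝ Set.univ (f t))
    (hsmooth : ∀ t w v, ‖f' t w - f' t v‖ ≤ L t * ‖w - v‖)
    (hmin : ∀ t w, f t xstar ≤ f t w)
    (hL : ∀ t, 0 < L t) (hN : ∀ t, L t ≤ Nt t)
    (hNbar : ∀ t, Nt t ≤ Nbar)
    (hβ : ∀ t, β t ∈ Set.Ico (0 : ℝ) 1)
    (hμ : ∀ t, μ t ∈ Set.Icc ε 1)
    (hγ : ∀ t, γ t = μ t / 2)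
    (hx : ∀ t, x t = β t • z t + (1 - β t) • y t)
    (hy : ∀ t, y (t + 1) = x t - (μ t / Nt t) • f' t (x t))
    (hz : ∀ t, z (t + 1) = z t - (γ t / Nt t) • f' t (x t)) :
    (∀ t, ∑ s ∈ Finset.range (t + 1), (f s (x s) - f s xstar)
        ≤ (Nbar / ε) * (‖z 0 - xstar‖ ^ 2 + ‖y 0 - z 0‖ ^ 2)) ∧
      Tendsto (fun t => f t (x t) - f t xstar) atTop (nhds 0) := by
  have hn : ∀ t, 0 < Nt t := fun t => (hL t).trans_le (hN t)
  set V : ℕ → ℝ := fun t => ‖z t - xstar‖ ^ 2 + ‖y t - z t‖ ^ 2 with hV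
  set D : ℕ → ℝ := fun t => f t (x t) - f t xstar with hD
  set c : ℕ → ℝ := fun t => μ t / Nt t with hc
  have hD0 : ∀ t, 0 ≤ D t := fun t => sub_nonneg.mpr (hmin t (x t))
  have hc0 : ∀ t, 0 < c t := fun t => div_pos (hε.trans_le (hμ t).1) (hn t)
  have hV0 : ∀ t, 0 ≤ V t := fun t => add_nonneg (sq_nonneg _) (sq_nonneg _)
  clear_value V D c
  -- gradient at the minimizer is zero
  have hgz : ∀ t, f' t xstar = 0 := by
    intro t
    have hlm : IsLocalMin (f t) xstar := (isMinOn_iff.mpr fun w _ => hmin t w).isLocalMin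
      Filter.univ_mem
    have h0 := hlm.hasFDerivAt_eq_zero (hgrad t xstar).hasFDerivAt
    exact (InnerProductSpace.toDual ℝ (EuclideanSpace ℝ (Fin N))).injective
      (by rw [h0, map_zero])
  -- key per-step Lyapunov inequality
  have hstep : ∀ t, V (t + 1) + c t * D t ≤ V t := by
    intro t
    set g : EuclideanSpace ℝ (Fin N) := f' t (x t) with hg
    set A : EuclideanSpace ℝ (Fin N) := z t - xstar with hA
    set B : EuclideanSpace ℝ (Fin N) := y t - z t with hB
    clear_value g A B
    have hb0 := (hβ t).1
    have hb1 := (hβ t).2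
    -- key gradient inequality
    have hkey : D t + ‖g‖ ^ 2 / (2 * Nt t) ≤ ⟪g, x t - xstar⟫ := by
      have h1 := ht_key (hL t) (hgrad t) (hconv t) (hsmooth t) (x t) xstar
      rw [hgz t, ← hg] at h1
      have h2 : ⟪g, xstar - x t⟫ = -⟪g, x t - xstar⟫ := by
        rw [← inner_neg_right, neg_sub]
      rw [h2] at h1
      simp only [zero_sub, norm_neg] at h1
      have h3 : ‖g‖ ^ 2 / (2 * Nt t) ≤ ‖g‖ ^ 2 / (2 * L t) := by
        apply div_le_div_of_nonneg_left (sq_nonneg _) (by linarith [hL t])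
        linarith [hN t]
      rw [hD]
      linarith
    -- geometric identities
    have hz1 : z (t + 1) - xstar = A - (c t / 2) • g := by
      rw [hz t, ← hg, hγ t, hA]
      simp only [hc]
      module
    have hy1 : y (t + 1) - z (t + 1) = (1 - β t) • B - (c t / 2) • g := by
      rw [hy t, hz t, ← hg, hγ t, hx t, hB]
      simp only [hc]
      module
    have hxsum : A + (1 - β t) • B = x t - xstar := by
      rw [hx t, hA, hB]; module
    have hIsum : ⟪A, g⟫ + (1 - β t) * ⟪B, g⟫ = ⟪g, x t - xstar⟫ := by
      rw [← hxsum, inner_add_right, real_inner_smul_right, real_inner_comm A g,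
        real_inner_comm B g]
    -- expand norms
    have hsm : ‖(c t / 2) • g‖ ^ 2 = (c t / 2) ^ 2 * ‖g‖ ^ 2 := by
      rw [norm_smul, Real.norm_eq_abs, mul_pow, sq_abs]
    have hVa : ‖z (t + 1) - xstar‖ ^ 2
        = ‖A‖ ^ 2 - 2 * ((c t / 2) * ⟪A, g⟫) + (c t / 2) ^ 2 * ‖g‖ ^ 2 := by
      rw [hz1, norm_sub_sq_real, real_inner_smul_right, hsm]
    have hVb : ‖y (t + 1) - z (t + 1)‖ ^ 2
        = (1 - β t) ^ 2 * ‖B‖ ^ 2 - 2 * ((1 - β t) * (c t / 2) * ⟪B, g⟫)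
          + (c t / 2) ^ 2 * ‖g‖ ^ 2 := by
      rw [hy1, norm_sub_sq_real, real_inner_smul_left, real_inner_smul_right, hsm,
        norm_smul, Real.norm_eq_abs, mul_pow, sq_abs]
      ring
    -- scalar bookkeeping
    have hcle : c t ≤ 1 / Nt t := by
      rw [hc]
      exact div_le_div₀ zero_le_one (hμ t).2 (hn t) le_rfl
    have hgn : 0 ≤ ‖g‖ ^ 2 := sq_nonneg _
    have hBn : 0 ≤ ‖B‖ ^ 2 := sq_nonneg _
    have hn' : Nt t ≠ 0 := ne_of_gt (hn t)
    have hlink : ‖g‖ ^ 2 / (2 * Nt t) = 1 / Nt t * ‖g‖ ^ 2 / 2 := by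
      field_simp
    have hIc : c t * (⟪A, g⟫ + (1 - β t) * ⟪B, g⟫) = c t * ⟪g, x t - xstar⟫ := by
      rw [hIsum]
    have e1 : c t * D t + c t * (‖g‖ ^ 2 / (2 * Nt t)) ≤ c t * ⟪g, x t - xstar⟫ := by
      have h := mul_le_mul_of_nonneg_left hkey (le_of_lt (hc0 t))
      rw [mul_add] at h
      exact h
    have e2 : c t * (‖g‖ ^ 2 / (2 * Nt t)) = c t * (1 / Nt t) * ‖g‖ ^ 2 / 2 := by
      rw [hlink]; ring
    have e3 : c t * c t * ‖g‖ ^ 2 ≤ c t * (1 / Nt t) * ‖g‖ ^ 2 :=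
      mul_le_mul_of_nonneg_right (mul_le_mul_of_nonneg_left hcle (le_of_lt (hc0 t))) hgn
    have e4 : (1 - β t) ^ 2 * ‖B‖ ^ 2 ≤ ‖B‖ ^ 2 := by
      nlinarith [mul_nonneg (mul_nonneg hb0 (by linarith : (0:ℝ) ≤ 2 - β t)) hBn]
    rw [hV]
    simp only
    rw [hVa, hVb, ← hA, ← hB]
    linarith [e1, e2, e3, e4, hIc]
  -- telescoping sum
  have hsum1 : ∀ t, (∑ s ∈ Finset.range (t + 1), c s * D s) + V (t + 1) ≤ V 0 := by
    intro t
    induction t with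
    | zero => simpa using le_of_eq_of_le (by ring) (hstep 0)
    | succ n ih =>
      rw [Finset.sum_range_succ]
      have := hstep (n + 1)
      linarith
  have hNbar0 : 0 < Nbar := lt_of_lt_of_le (hn 0) (hNbar 0)
  have hratio0 : 0 ≤ Nbar / ε := div_nonneg (le_of_lt hNbar0) (le_of_lt hε)
  have hcD : ∀ s, D s ≤ (Nbar / ε) * (c s * D s) := by
    intro s
    have h1 : ε / Nbar ≤ c s := by
      rw [hc]
      exact div_le_div₀ (le_trans hε.le (hμ s).1) (hμ s).1 (hn s) (hNbar s)
    have h2 := mul_le_mul_of_nonneg_right h1 (hD0 s)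
    have h3 := mul_le_mul_of_nonneg_left h2 hratio0
    have heq : Nbar / ε * (ε / Nbar * D s) = D s := by
      field_simp
    linarith
  have hmain : ∀ t, ∑ s ∈ Finset.range (t + 1), D s ≤ (Nbar / ε) * V 0 := by
    intro t
    calc ∑ s ∈ Finset.range (t + 1), D s
        ≤ ∑ s ∈ Finset.range (t + 1), (Nbar / ε) * (c s * D s) :=
          Finset.sum_le_sum fun s _ => hcD s
      _ = (Nbar / ε) * ∑ s ∈ Finset.range (t + 1), c s * D s := by
          rw [Finset.mul_sum]
      _ ≤ (Nbar / ε) * V 0 := by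
          apply mul_le_mul_of_nonneg_left ?_ hratio0
          linarith [hsum1 t, hV0 (t + 1)]
  constructor
  · intro t
    have h := hmain t
    simp only [hV] at h
    exact h
  · have hsummable : Summable D := by
      apply summable_of_sum_range_le hD0
      intro n
      cases n with
      | zero => simpa using mul_nonneg hratio0 (hV0 0)
      | succ m => exact hmain m
    exact hsummable.tendsto_atTop_zero
end

section
/- Consider the high-order tuner on ℝ^N with time-varying hyper-parameters: xₜ = βₜ zₜ + (1-βₜ) yₜ, yₜ₊₁ = xₜ - (μₜ/Nₜ)∇fₜ(xₜ), zₜ₊₁ = zₜ - (γₜ/Nₜ)∇fₜ(xₜ), where fₜ is convex Lₜ-smooth with common minimizer x* and Nₜ ≥ Lₜ > 0. Suppose there are sequences λₜ ∈ [0, 1-ε] and ξₜ ∈ [ε, ∞), ε > 0, such that c₅ := γₜ² + ξₜ₊₁(γₜ-μₜ)² - (1+λₜ)γₜ < 0, c₆ := 2[ξₜ₊₁(γₜ-μₜ) + γₜ], c₇ := ξₜ₊₁ - ξₜ(1-βₜ)⁻², and c₇ - c₆²/(4c₅) ≤ 0. Then Wₜ = ‖zₜ - x*‖² + ξₜ‖yₜ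 - zₜ‖² satisfies Wₜ₊₁ - Wₜ ≤ 2((1-λₜ)γₜ/Nₜ)(fₜ(x*) - fₜ(xₜ)) ≤ 0. -/
open scoped RealInnerProductSpace

variable {E : Type*} [NormedAddCommGroup E] [InnerProductSpace ℝ E] [CompleteSpace E]

lemma line_deriv {f : E → ℝ} {g w d : E} (s : ℝ) (hg : HasGradientAt f g (w + s • d)) :
    HasDerivAt (fun s : ℝ => f (w + s • d)) ⟪g, d⟫ s := by
  have hline : HasDerivAt (fun s : ℝ => w + s • d) d s := by
    simpa using ((hasDerivAt_id s).smul_const d).const_add w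
  have := (hasGradientAt_iff_hasFDerivAt.mp hg).comp_hasDerivAt s hline
  exact this

lemma grad_ineq {f : E → ℝ} {g w : E} (hconv : ConvexOn ℝ Set.univ f)
    (hg : HasGradientAt f g w) (v : E) : f w + ⟪g, v - w⟫ ≤ f v := by
  set d := v - w with hd
  have hderiv : HasDerivAt (fun s : ℝ => f (w + s • d)) ⟪g, d⟫ 0 := by
    apply line_deriv
    simpa using hg
  have htend : Filter.Tendsto (slope (fun s : ℝ => f (w + s • d)) 0) (nhdsWithin 0 (Set.Ioi 0))
      (nhds ⟪g, d⟫) :=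
    ((hasDerivAt_iff_tendsto_slope.mp hderiv).mono_left
      (nhdsWithin_mono _ (fun s hs => ne_of_gt hs)))
  have hbound : ∀ᶠ s in nhdsWithin (0:ℝ) (Set.Ioi 0),
      slope (fun s : ℝ => f (w + s • d)) 0 s ≤ f v - f w := by
    filter_upwards [Ioc_mem_nhdsGT_of_mem (by norm_num : (0:ℝ) ∈ Set.Ico 0 1)] with s hs
    have hs0 : 0 < s := hs.1
    have hs1 : s ≤ 1 := hs.2
    have hcvx := hconv.2 (Set.mem_univ w) (Set.mem_univ v)
      (by linarith : (0:ℝ) ≤ 1 - s) hs0.le (by ring)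
    have hpt : (1 - s) • w + s • v = w + s • d := by
      rw [hd]; module
    rw [hpt] at hcvx
    rw [slope_def_field]
    simp only [zero_smul, add_zero, sub_zero, smul_eq_mul] at *
    rw [div_le_iff₀ hs0]
    nlinarith [hcvx]
  have := le_of_tendsto htend hbound
  linarith

lemma descent_lemma {f : E → ℝ} {g : E → E} {L : ℝ}
    (hg : ∀ u, HasGradientAt f (g u) u)
    (hlip : ∀ u u', ‖g u - g u'‖ ≤ L * ‖u - u'‖) (w v : E) :
    f v ≤ f w + ⟪g w, v - w⟫ + L / 2 * ‖v - w‖ ^ 2 := by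
  set d := v - w with hd
  set ψ : ℝ → ℝ := fun s => f (w + s • d) - s * ⟪g w, d⟫ - L / 2 * s ^ 2 * ‖d‖ ^ 2 with hψ
  have hψd : ∀ s : ℝ, HasDerivAt ψ (⟪g (w + s • d), d⟫ - ⟪g w, d⟫ - L * s * ‖d‖ ^ 2) s := by
    intro s
    have h1 : HasDerivAt (fun s : ℝ => f (w + s • d)) ⟪g (w + s • d), d⟫ s :=
      line_deriv s (hg _)
    have h2 : HasDerivAt (fun s : ℝ => s * ⟪g w, d⟫) ⟪g w, d⟫ s := by
      simpa using (hasDerivAt_id s).mul_const ⟪g w, d⟫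
    have h3 : HasDerivAt (fun s : ℝ => L / 2 * s ^ 2 * ‖d‖ ^ 2) (L * s * ‖d‖ ^ 2) s := by
      have := ((hasDerivAt_pow 2 s).const_mul (L / 2)).mul_const (‖d‖ ^ 2)
      convert this using 1
      · rfl
      · rfl
      ring
    exact (h1.sub h2).sub h3
  have hcont : Continuous ψ := by
    have : Differentiable ℝ ψ := fun s => (hψd s).differentiableAt
    exact this.continuous
  have hanti : AntitoneOn ψ (Set.Icc 0 1) := by
    apply antitoneOn_of_deriv_nonpos (convex_Icc 0 1) hcont.continuousOn
    · intro s hs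
      exact ((hψd s).differentiableAt).differentiableWithinAt
    · intro s hs
      rw [interior_Icc] at hs
      rw [(hψd s).deriv]
      have h1 : ⟪g (w + s • d), d⟫ - ⟪g w, d⟫ = ⟪g (w + s • d) - g w, d⟫ := by
        rw [inner_sub_left]
      have h2 : ⟪g (w + s • d) - g w, d⟫ ≤ ‖g (w + s • d) - g w‖ * ‖d‖ :=
        real_inner_le_norm _ _
      have h3 : ‖g (w + s • d) - g w‖ ≤ L * ‖s • d‖ := by
        simpa using hlip (w + s • d) w
      have h4 : ‖s • d‖ = s * ‖d‖ := by
        rw [norm_smul, Real.norm_eq_abs, abs_of_pos hs.1]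
      have hdn : (0:ℝ) ≤ ‖d‖ := norm_nonneg d
      rw [h4] at h3
      nlinarith [mul_le_mul_of_nonneg_right h3 hdn]
  have key := hanti (Set.mem_Icc.mpr ⟨le_refl 0, zero_le_one⟩)
    (Set.mem_Icc.mpr ⟨zero_le_one, le_refl 1⟩) zero_le_one
  have e0 : ψ 0 = f w := by simp [hψ]
  have e1 : ψ 1 = f v - ⟪g w, d⟫ - L / 2 * ‖d‖ ^ 2 := by
    simp [hψ, hd]
  rw [e0, e1] at key
  linarith

lemma cocoercive {f : E → ℝ} {g : E → E} {L : ℝ} (hL : 0 < L)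
    (hconv : ConvexOn ℝ Set.univ f)
    (hg : ∀ u, HasGradientAt f (g u) u)
    (hlip : ∀ u u', ‖g u - g u'‖ ≤ L * ‖u - u'‖) (w v : E) :
    f w + ⟪g w, v - w⟫ + 1 / (2 * L) * ‖g v - g w‖ ^ 2 ≤ f v := by
  set φ : E → ℝ := fun u => f u - ⟪g w, u⟫ with hφ
  have hinner : ∀ u : E, HasGradientAt (fun u : E => ⟪g w, u⟫) (g w) u := by
    intro u
    rw [hasGradientAt_iff_hasFDerivAt]
    have := (InnerProductSpace.toDual ℝ E (g w)).hasFDerivAt (x := u)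
    exact this
  have hφg : ∀ u, HasGradientAt φ (g u - g w) u := by
    intro u
    rw [hasGradientAt_iff_hasFDerivAt, map_sub]
    exact ((hg u).hasFDerivAt).sub (hasGradientAt_iff_hasFDerivAt.mp (hinner u))
  have hlin : ConcaveOn ℝ Set.univ (fun u : E => ⟪g w, u⟫) := by
    refine ⟨convex_univ, fun x _ y _ a b _ _ _ => le_of_eq ?_⟩
    simp [inner_add_right, real_inner_smul_right]
  have hφconv : ConvexOn ℝ Set.univ φ := hconv.sub hlin
  have hφlip : ∀ u u', ‖(g u - g w) - (g u' - g w)‖ ≤ L * ‖u - u'‖ := by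
    intro u u'
    simpa [sub_sub_sub_cancel_right] using hlip u u'
  have hmin : ∀ u, φ w ≤ φ u := by
    intro u
    have := grad_ineq hφconv (hφg w) u
    simpa using this
  set q := g v - g w with hq
  have hdesc := descent_lemma hφg hφlip v (v + (-(1 / L)) • q)
  have h1 : v + (-(1 / L)) • q - v = (-(1 / L)) • q := by abel
  rw [h1] at hdesc
  have h2 : ⟪g v - g w, (-(1 / L)) • q⟫ = -(1 / L) * ‖q‖ ^ 2 := by
    rw [real_inner_smul_right, ← hq, real_inner_self_eq_norm_sq]
  have h3 : ‖(-(1 / L)) • q‖ ^ 2 = (1 / L) ^ 2 * ‖q‖ ^ 2 := by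
    rw [norm_smul]
    simp [abs_of_pos hL]
    ring
  rw [h2, h3] at hdesc
  have hkey := le_trans (hmin (v + (-(1 / L)) • q)) hdesc
  have h4 : φ w = f w - ⟪g w, w⟫ := rfl
  have h5 : φ v = f v - ⟪g w, v⟫ := rfl
  have h6 : ⟪g w, v - w⟫ = ⟪g w, v⟫ - ⟪g w, w⟫ := inner_sub_right _ _ _
  rw [h4, h5] at hkey
  have hL' : L ≠ 0 := ne_of_gt hL
  have harith : -(1 / L) * ‖q‖ ^ 2 + L / 2 * ((1 / L) ^ 2 * ‖q‖ ^ 2) = -(1 / (2 * L)) * ‖q‖ ^ 2 := by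
    field_simp
    ring
  rw [h6]
  nlinarith [hkey, harith]

lemma grad_min_zero {f : E → ℝ} {g xstar : E} (hg : HasGradientAt f g xstar)
    (hmin : ∀ w, f xstar ≤ f w) : g = 0 := by
  have hloc : IsLocalMin f xstar := Filter.Eventually.of_forall hmin
  have h0 := hloc.hasFDerivAt_eq_zero (hasGradientAt_iff_hasFDerivAt.mp hg)
  have : g = (InnerProductSpace.toDual ℝ E).symm ((InnerProductSpace.toDual ℝ E) g) := by simp
  rw [this, h0]
  simp

lemma quad_id (c5 c6 c7 A B C : ℝ) (h : c5 ≠ 0) :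
    c5 * A + c6 * B + c7 * C =
      c5 * (A + 2 * (c6 / (2 * c5)) * B + (c6 / (2 * c5)) ^ 2 * C)
        + (c7 - c6 ^ 2 / (4 * c5)) * C := by
  field_simp
  ring

set_option maxHeartbeats 1000000 in
theorem stmt_9 (N : ℕ)
    (f : ℕ → EuclideanSpace ℝ (Fin N) → ℝ)
    (f' : ℕ → EuclideanSpace ℝ (Fin N) → EuclideanSpace ℝ (Fin N))
    (x y z : ℕ → EuclideanSpace ℝ (Fin N))
    (xstar : EuclideanSpace ℝ (Fin N))
    (L Nt β μ γ lam ξ : ℕ → ℝ) (ε : ℝ) (hε : 0 < ε)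
    (hgrad : ∀ t w, HasGradientAt (f t) (f' t w) w)
    (hconv : ∀ t, ConvexOn ℝ Set.univ (f t))
    (hsmooth : ∀ t w v, ‖f' t w - f' t v‖ ≤ L t * ‖w - v‖)
    (hmin : ∀ t w, f t xstar ≤ f t w)
    (hL : ∀ t, 0 < L t) (hN : ∀ t, L t ≤ Nt t)
    (hβ : ∀ t, β t ∈ Set.Ico (0 : ℝ) 1)
    (hlam : ∀ t, lam t ∈ Set.Icc (0 : ℝ) (1 - ε))
    (hξ : ∀ t, ξ t ∈ Set.Ici ε)
    (hc₅ : ∀ t, γ t ^ 2 + ξ (t + 1) * (γ t - μ t) ^ 2 - (1 + lam t) * γ t < 0)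
    (hc₇ : ∀ t,
      (ξ (t + 1) - ξ t * (1 - β t)⁻¹ ^ 2) -
          (2 * (ξ (t + 1) * (γ t - μ t) + γ t)) ^ 2 /
            (4 * (γ t ^ 2 + ξ (t + 1) * (γ t - μ t) ^ 2 - (1 + lam t) * γ t)) ≤ 0)
    (hx : ∀ t, x t = β t • z t + (1 - β t) • y t)
    (hy : ∀ t, y (t + 1) = x t - (μ t / Nt t) • f' t (x t))
    (hz : ∀ t, z (t + 1) = z t - (γ t / Nt t) • f' t (x t)) :
    ∀ t, (‖z (t + 1) - xstar‖ ^ 2 + ξ (t + 1) * ‖y (t + 1) - z (t + 1)‖ ^ 2)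
          - (‖z t - xstar‖ ^ 2 + ξ t * ‖y t - z t‖ ^ 2)
        ≤ 2 * ((1 - lam t) * γ t / Nt t) * (f t xstar - f t (x t)) ∧
      2 * ((1 - lam t) * γ t / Nt t) * (f t xstar - f t (x t)) ≤ 0 := by
  intro t
  have hLt := hL t
  have hn : 0 < Nt t := lt_of_lt_of_le hLt (hN t)
  have hn0 : Nt t ≠ 0 := ne_of_gt hn
  have hLN : L t ≤ Nt t := hN t
  have hl0 : 0 ≤ lam t := (hlam t).1
  have hl1 : lam t ≤ 1 - ε := (hlam t).2
  have h1l : 0 < 1 + lam t := by linarith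
  have hξ' : ε ≤ ξ (t + 1) := hξ (t + 1)
  have hξ'pos : 0 < ξ (t + 1) := lt_of_lt_of_le hε hξ'
  have h1β : 0 < 1 - β t := by have := (hβ t).2; linarith
  -- gradient at xstar is zero
  have hstar : f' t xstar = 0 := grad_min_zero (hgrad t xstar) (hmin t)
  set g : EuclideanSpace ℝ (Fin N) := f' t (x t) with hg
  set G : ℝ := ‖g‖ ^ 2 with hG
  set D : ℝ := f t xstar - f t (x t) with hD
  have hGnn : 0 ≤ G := sq_nonneg _
  have hD0 : D ≤ 0 := by have := hmin t (x t); simp [hD]; linarith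
  -- (A): D ≤ -(1/(2L)) G
  have hA : D ≤ -(1 / (2 * L t)) * G := by
    have := cocoercive hLt (hconv t) (hgrad t) (hsmooth t) xstar (x t)
    rw [hstar] at this
    simp only [inner_zero_left, sub_zero, add_zero] at this
    rw [hD, hG, hg]
    linarith
  -- (B)
  set I : ℝ := ⟪g, x t - xstar⟫ with hI
  have hB : -I ≤ D - 1 / (2 * L t) * G := by
    have := cocoercive hLt (hconv t) (hgrad t) (hsmooth t) (x t) xstar
    rw [hstar] at this
    have hng : ‖(0 : EuclideanSpace ℝ (Fin N)) - g‖ = ‖g‖ := by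
      rw [zero_sub, norm_neg]
    rw [hng] at this
    have hIneg : ⟪g, xstar - x t⟫ = -I := by
      rw [hI, ← inner_neg_right, neg_sub]
    rw [hIneg] at this
    rw [hD, hG]
    linarith
  -- key scalar inequality
  have hLn : 1 / (2 * Nt t) ≤ 1 / (2 * L t) := by
    apply one_div_le_one_div_of_le (by linarith) (by linarith)
  have hK : -I ≤ (1 - lam t) * D - (1 + lam t) * (1 / (2 * Nt t)) * G := by
    have s1 : lam t * D ≤ lam t * (-(1 / (2 * L t)) * G) :=
      mul_le_mul_of_nonneg_left hA hl0
    have s2 : (1 + lam t) * (1 / (2 * Nt t)) * G ≤ (1 + lam t) * (1 / (2 * L t)) * G := by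
      apply mul_le_mul_of_nonneg_right _ hGnn
      exact mul_le_mul_of_nonneg_left hLn (le_of_lt h1l)
    nlinarith [hB, s1, s2]
  -- γ t > 0
  have hγ : 0 < γ t := by
    nlinarith [hc₅ t, sq_nonneg (γ t), mul_nonneg hξ'pos.le (sq_nonneg (γ t - μ t)), h1l]
  -- vectors
  set a : EuclideanSpace ℝ (Fin N) := (1 / Nt t) • g with ha
  set b : EuclideanSpace ℝ (Fin N) := x t - z t with hb
  set p : EuclideanSpace ℝ (Fin N) := z t - xstar with hp
  set A2 : ℝ := ‖a‖ ^ 2 with hA2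
  set B2 : ℝ := ‖b‖ ^ 2 with hB2
  set AB : ℝ := ⟪a, b⟫ with hAB
  have hB2nn : 0 ≤ B2 := sq_nonneg _
  have hz' : z (t + 1) - xstar = p - γ t • a := by
    rw [hz t, hp, ha, smul_smul]
    have : γ t * (1 / Nt t) = γ t / Nt t := by field_simp
    rw [this]
    abel
  have hy' : y (t + 1) - z (t + 1) = b + (γ t - μ t) • a := by
    have e : (γ t - μ t) • a = (γ t / Nt t) • g - (μ t / Nt t) • g := by
      rw [ha, smul_smul, ← sub_smul]
      congr 1
      field_simp
    rw [hy t, hz t, e, hb]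
    abel
  have hbeq : b = (1 - β t) • (y t - z t) := by
    rw [hb, hx t]
    module
  have hyz : ξ t * ‖y t - z t‖ ^ 2 = ξ t * ((1 - β t)⁻¹ ^ 2 * B2) := by
    have hbn : B2 = (1 - β t) ^ 2 * ‖y t - z t‖ ^ 2 := by
      rw [hB2, hbeq, norm_smul, Real.norm_eq_abs, abs_of_pos h1β]
      ring
    rw [hbn]
    have h1β0 : (1 - β t) ≠ 0 := ne_of_gt h1β
    field_simp
  have Ea : A2 = (1 / Nt t) ^ 2 * G := by
    rw [hA2, ha, norm_smul, Real.norm_eq_abs, abs_of_pos (by positivity : (0:ℝ) < 1 / Nt t), hG]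
    ring
  have E1 : ‖p - γ t • a‖ ^ 2 = ‖p‖ ^ 2 - 2 * γ t * ⟪p, a⟫ + γ t ^ 2 * A2 := by
    rw [norm_sub_sq_real, real_inner_smul_right, norm_smul, Real.norm_eq_abs, mul_pow, sq_abs,
      hA2]
    ring
  have E2 : ‖b + (γ t - μ t) • a‖ ^ 2 = B2 + 2 * (γ t - μ t) * AB + (γ t - μ t) ^ 2 * A2 := by
    rw [norm_add_sq_real, real_inner_smul_right, norm_smul, Real.norm_eq_abs, mul_pow, sq_abs,
      hA2, hB2, hAB, real_inner_comm b a]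
    ring
  have E3 : ⟪p, a⟫ = (1 / Nt t) * I - AB := by
    have hpe : p = (x t - xstar) - b := by rw [hp, hb]; abel
    rw [hpe, inner_sub_left, hAB, real_inner_comm b a, hI, ha, real_inner_smul_right,
      real_inner_comm]
  -- quadratic form nonpositivity
  set c₅ : ℝ := γ t ^ 2 + ξ (t + 1) * (γ t - μ t) ^ 2 - (1 + lam t) * γ t with hc5
  set c₆ : ℝ := 2 * (ξ (t + 1) * (γ t - μ t) + γ t) with hc6
  set c₇ : ℝ := ξ (t + 1) - ξ t * (1 - β t)⁻¹ ^ 2 with hc7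
  have hc5neg : c₅ < 0 := hc₅ t
  have hc5ne : c₅ ≠ 0 := ne_of_lt hc5neg
  clear_value g G D I a b p A2 B2 AB c₅ c₆ c₇
  have hQ : c₅ * A2 + c₆ * AB + c₇ * B2 ≤ 0 := by
    set k : ℝ := c₆ / (2 * c₅) with hk
    clear_value k
    have hexp : ‖a + k • b‖ ^ 2 = A2 + 2 * k * AB + k ^ 2 * B2 := by
      rw [norm_add_sq_real, real_inner_smul_right, norm_smul, Real.norm_eq_abs, mul_pow, sq_abs,
        hA2, hB2, hAB]
      ring
    have hid : c₅ * A2 + c₆ * AB + c₇ * B2 =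
        c₅ * (A2 + 2 * k * AB + k ^ 2 * B2) + (c₇ - c₆ ^ 2 / (4 * c₅)) * B2 := by
      rw [hk]
      exact quad_id c₅ c₆ c₇ A2 AB B2 hc5ne
    have hsq1 : c₅ * ‖a + k • b‖ ^ 2 ≤ 0 :=
      mul_nonpos_of_nonpos_of_nonneg (le_of_lt hc5neg) (sq_nonneg _)
    have hsq2 : (c₇ - c₆ ^ 2 / (4 * c₅)) * B2 ≤ 0 :=
      mul_nonpos_of_nonpos_of_nonneg (by rw [hc5, hc6, hc7]; exact hc₇ t) hB2nn
    rw [hexp] at hsq1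
    linarith [hid, hsq1, hsq2]
  -- assemble
  set R : ℝ := 2 * ((1 - lam t) * γ t / Nt t) * D with hR
  have hΔ : (‖z (t + 1) - xstar‖ ^ 2 + ξ (t + 1) * ‖y (t + 1) - z (t + 1)‖ ^ 2)
      - (‖p‖ ^ 2 + ξ t * ‖y t - z t‖ ^ 2) =
      -(2 * γ t) * ((1 / Nt t) * I) + 2 * γ t * AB + γ t ^ 2 * A2
        + ξ (t + 1) * (B2 + 2 * (γ t - μ t) * AB + (γ t - μ t) ^ 2 * A2)
        - ξ t * ((1 - β t)⁻¹ ^ 2 * B2) := by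
    rw [hz', hy', E1, E2, E3, hyz]
    ring
  have h2γn : 0 ≤ 2 * γ t * (1 / Nt t) := by positivity
  have hmul : -(2 * γ t) * ((1 / Nt t) * I) ≤ R - (1 + lam t) * γ t * A2 := by
    have := mul_le_mul_of_nonneg_left hK h2γn
    have heq : 2 * γ t * (1 / Nt t) *
        ((1 - lam t) * D - (1 + lam t) * (1 / (2 * Nt t)) * G) =
        R - (1 + lam t) * γ t * A2 := by
      rw [Ea, hR]
      field_simp
    calc -(2 * γ t) * ((1 / Nt t) * I) = 2 * γ t * (1 / Nt t) * (-I) := by ring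
      _ ≤ 2 * γ t * (1 / Nt t) *
          ((1 - lam t) * D - (1 + lam t) * (1 / (2 * Nt t)) * G) := this
      _ = R - (1 + lam t) * γ t * A2 := heq
  have hrest : 2 * γ t * AB + γ t ^ 2 * A2
      + ξ (t + 1) * (B2 + 2 * (γ t - μ t) * AB + (γ t - μ t) ^ 2 * A2)
      - ξ t * ((1 - β t)⁻¹ ^ 2 * B2) - (1 + lam t) * γ t * A2
      = c₅ * A2 + c₆ * AB + c₇ * B2 := by
    rw [hc5, hc6, hc7]
    ring
  constructor
  · linarith [hΔ, hmul, hQ, hrest]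
  · rw [hR]
    have h1 : (0:ℝ) ≤ 1 - lam t := by linarith
    have hcoef : 0 ≤ 2 * ((1 - lam t) * γ t / Nt t) :=
      mul_nonneg (by norm_num) (div_nonneg (mul_nonneg h1 hγ.le) hn.le)
    exact mul_nonpos_of_nonneg_of_nonpos hcoef hD0
end

section
/- Consider the high-order tuner with γₜ = μₜ/2, μₜ ∈ (0,1], βₜ ∈ [0,1), applied to fₜ convex, Lₜ-smooth, and σₜ-strongly convex with minimizer x*, Nₜ ≥ Lₜ. Let β̄ₜ = 1 - βₜ, ρₜ = (μₜ/2)(σₜ/Nₜ), and pick νₜ ∈ (0,1). Then Vₜ = ‖zₜ - x*‖² + ‖yₜ - zₜ‖² satisfies Vₜ₊₁ ≤ (1 - ωₜ)Vₜ where ωₜ = min{ (1-νₜ)(1-β̄ₜ²), ρₜνₜ(1-β̄ₜ²) / (ρₜβ̄ₜ² + νₜ(1-β̄ₜ²)) }. -/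
open scoped RealInnerProductSpace
set_option maxHeartbeats 1000000

lemma descent_s11 {F : Type*} [NormedAddCommGroup F] [InnerProductSpace ℝ F] [CompleteSpace F]
    (f : F → ℝ) (f' : F → F) (L : ℝ)
    (hgrad : ∀ w, HasGradientAt f (f' w) w)
    (hsmooth : ∀ w v, ‖f' w - f' v‖ ≤ L * ‖w - v‖)
    (w v : F) :
    f v ≤ f w + ⟪f' w, v - w⟫ + L / 2 * ‖v - w‖ ^ 2 := by
  set u := v - w with hu
  have hline : ∀ s : ℝ, HasDerivAt (fun s : ℝ => w + s • u) u s := fun s => by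
    simpa using ((hasDerivAt_id s).smul_const u).const_add w
  have hφ : ∀ s : ℝ, HasDerivAt (fun s : ℝ => f (w + s • u)) ⟪f' (w + s • u), u⟫ s := fun s => by
    have h1 := (hgrad (w + s • u)).hasFDerivAt
    have h2 := h1.comp_hasDerivAt s (hline s)
    have h3 : HasDerivAt (fun s : ℝ => f (w + s • u))
        ((InnerProductSpace.toDual ℝ F (f' (w + s • u))) u) s := h2
    simpa [InnerProductSpace.toDual_apply_apply] using h3
  set ψ : ℝ → ℝ := fun s => f (w + s • u) - s * ⟪f' w, u⟫ - s ^ 2 * (L / 2 * ‖u‖ ^ 2) with hψdef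
  have hψ : ∀ s : ℝ, HasDerivAt ψ (⟪f' (w + s • u), u⟫ - ⟪f' w, u⟫ - s * (L * ‖u‖ ^ 2)) s := by
    intro s
    have h2 : HasDerivAt (fun s : ℝ => s * ⟪f' w, u⟫) ⟪f' w, u⟫ s := by
      simpa using (hasDerivAt_id s).mul_const ⟪f' w, u⟫
    have h3 : HasDerivAt (fun s : ℝ => s ^ 2 * (L / 2 * ‖u‖ ^ 2)) (2 * s * (L / 2 * ‖u‖ ^ 2)) s := by
      simpa using (hasDerivAt_pow 2 s).mul_const (L / 2 * ‖u‖ ^ 2)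
    have h4 := ((hφ s).sub h2).sub h3
    convert h4 using 1
    · rfl
    · rfl
    · rfl
    ring
  have hmono : AntitoneOn ψ (Set.Icc (0 : ℝ) 1) := by
    apply antitoneOn_of_deriv_nonpos (convex_Icc 0 1)
    · exact (Differentiable.continuous (fun s => (hψ s).differentiableAt)).continuousOn
    · intro s _
      exact (hψ s).differentiableAt.differentiableWithinAt
    · intro s hs
      rw [interior_Icc] at hs
      rw [(hψ s).deriv]
      have h4 : ⟪f' (w + s • u) - f' w, u⟫ ≤ ‖f' (w + s • u) - f' w‖ * ‖u‖ :=
        real_inner_le_norm _ _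
      have h5 : ‖f' (w + s • u) - f' w‖ ≤ L * ‖(w + s • u) - w‖ := hsmooth _ _
      have h6 : ‖(w + s • u) - w‖ = s * ‖u‖ := by
        simp [norm_smul, abs_of_nonneg hs.1.le]
      rw [h6] at h5
      have h7 := mul_le_mul_of_nonneg_right h5 (norm_nonneg u)
      have h8 : ⟪f' (w + s • u) - f' w, u⟫ = ⟪f' (w + s • u), u⟫ - ⟪f' w, u⟫ :=
        inner_sub_left _ _ _
      nlinarith [h4, h7, h8]
  have h01 : ψ 1 ≤ ψ 0 := hmono (Set.mem_Icc.2 ⟨le_refl 0, zero_le_one⟩)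
    (Set.mem_Icc.2 ⟨zero_le_one, le_refl 1⟩) zero_le_one
  have e0 : ψ 0 = f w := by simp [hψdef]
  have e1 : ψ 1 = f v - ⟪f' w, u⟫ - L / 2 * ‖u‖ ^ 2 := by
    simp [hψdef, hu]
  rw [e0, e1] at h01
  linarith

lemma sq_aux {F : Type*} [NormedAddCommGroup F] [InnerProductSpace ℝ F] (s u : ℝ) (d c : F) :
    0 ≤ s ^ 2 * ‖d‖ ^ 2 + 2 * s * u * ⟪d, c⟫ + u ^ 2 * ‖c‖ ^ 2 := by
  have h : (0:ℝ) ≤ ‖s • d + u • c‖ ^ 2 := by positivity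
  rw [norm_add_sq_real, real_inner_smul_left, real_inner_smul_right, norm_smul, norm_smul,
    Real.norm_eq_abs, Real.norm_eq_abs, mul_pow, mul_pow, sq_abs, sq_abs] at h
  nlinarith [h]

lemma endgame (ρ ν b P Q R V : ℝ) (hb0 : 0 < b) (hb1 : b ≤ 1) (hν0 : 0 < ν)
    (hρ0 : 0 < ρ) (hP : 0 ≤ P) (hQ : 0 ≤ Q)
    (hsq : 0 ≤ (ρ * b ^ 2) ^ 2 * P
      + 2 * (ρ * b ^ 2) * (b * (ρ * b ^ 2 + ν * (1 - b ^ 2))) * R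
      + (b * (ρ * b ^ 2 + ν * (1 - b ^ 2))) ^ 2 * Q)
    (hV : V ≤ P + b ^ 2 * Q - ρ * (P + 2 * b * R + b ^ 2 * Q)) :
    V ≤ (1 - min ((1 - ν) * (1 - b ^ 2))
        (ρ * ν * (1 - b ^ 2) / (ρ * b ^ 2 + ν * (1 - b ^ 2)))) * (P + Q) := by
  have hb2 : (0:ℝ) ≤ 1 - b ^ 2 := by nlinarith
  have hD0 : 0 < ρ * b ^ 2 + ν * (1 - b ^ 2) := by
    nlinarith [mul_pos hρ0 (pow_pos hb0 2), mul_nonneg hν0.le hb2]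
  set A := (1 - ν) * (1 - b ^ 2) with hA
  set B := ρ * ν * (1 - b ^ 2) / (ρ * b ^ 2 + ν * (1 - b ^ 2)) with hB
  have hBD : B * (ρ * b ^ 2 + ν * (1 - b ^ 2)) = ρ * ν * (1 - b ^ 2) := by
    rw [hB]; exact div_mul_cancel₀ _ hD0.ne'
  have hkey2 : b ^ 2 * (ρ * b ^ 2 + ν * (1 - b ^ 2)) *
      (ρ * P + 2 * ρ * b * R + ρ * b ^ 2 * Q + ν * (1 - b ^ 2) * Q - B * P)
      = (ρ * b ^ 2) ^ 2 * P
      + 2 * (ρ * b ^ 2) * (b * (ρ * b ^ 2 + ν * (1 - b ^ 2))) * R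
      + (b * (ρ * b ^ 2 + ν * (1 - b ^ 2))) ^ 2 * Q := by
    linear_combination (-(b ^ 2 * P)) * hBD
  have hexpr : 0 ≤ ρ * P + 2 * ρ * b * R + ρ * b ^ 2 * Q + ν * (1 - b ^ 2) * Q - B * P := by
    nlinarith [hkey2, hsq, mul_pos (pow_pos hb0 2) hD0]
  have hmA : min A B ≤ A := min_le_left _ _
  have hmB : min A B ≤ B := min_le_right _ _
  have h1 := mul_le_mul_of_nonneg_right (sub_le_sub_left hmB 1) hP
  have h2 := mul_le_mul_of_nonneg_right (sub_le_sub_left hmA 1) hQ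
  calc V ≤ P + b ^ 2 * Q - ρ * (P + 2 * b * R + b ^ 2 * Q) := hV
    _ ≤ (1 - B) * P + (1 - A) * Q := by rw [hA]; nlinarith [hexpr]
    _ ≤ (1 - min A B) * (P + Q) := by nlinarith [h1, h2]

theorem stmt_11 (N : ℕ)
    (f : ℕ → EuclideanSpace ℝ (Fin N) → ℝ)
    (f' : ℕ → EuclideanSpace ℝ (Fin N) → EuclideanSpace ℝ (Fin N))
    (x y z : ℕ → EuclideanSpace ℝ (Fin N))
    (xstar : EuclideanSpace ℝ (Fin N))
    (L Nt β μ γ σ ν : ℕ → ℝ)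
    (hgrad : ∀ t w, HasGradientAt (f t) (f' t w) w)
    (hconv : ∀ t, ConvexOn ℝ Set.univ (f t))
    (hsmooth : ∀ t w v, ‖f' t w - f' t v‖ ≤ L t * ‖w - v‖)
    (hstrong : ∀ t w v, f t v ≥ f t w + ⟪f' t w, v - w⟫ + (σ t / 2) * ‖v - w‖ ^ 2)
    (hσ : ∀ t, 0 < σ t)
    (hmin : ∀ t w, f t xstar ≤ f t w)
    (hL : ∀ t, 0 < L t) (hN : ∀ t, L t ≤ Nt t)
    (hβ : ∀ t, β t ∈ Set.Ico (0 : ℝ) 1)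
    (hμ : ∀ t, μ t ∈ Set.Ioc (0 : ℝ) 1)
    (hγ : ∀ t, γ t = μ t / 2)
    (hν : ∀ t, ν t ∈ Set.Ioo (0 : ℝ) 1)
    (hx : ∀ t, x t = β t • z t + (1 - β t) • y t)
    (hy : ∀ t, y (t + 1) = x t - (μ t / Nt t) • f' t (x t))
    (hz : ∀ t, z (t + 1) = z t - (γ t / Nt t) • f' t (x t)) :
    ∀ t,
      ‖z (t + 1) - xstar‖ ^ 2 + ‖y (t + 1) - z (t + 1)‖ ^ 2 ≤
        (1 - min ((1 - ν t) * (1 - (1 - β t) ^ 2))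
            (((μ t / 2) * (σ t / Nt t)) * ν t * (1 - (1 - β t) ^ 2) /
              (((μ t / 2) * (σ t / Nt t)) * (1 - β t) ^ 2 + ν t * (1 - (1 - β t) ^ 2)))) *
          (‖z t - xstar‖ ^ 2 + ‖y t - z t‖ ^ 2) := by
  intro t
  obtain ⟨hβ0, hβ1⟩ := hβ t
  obtain ⟨hμ0, hμ1⟩ := hμ t
  obtain ⟨hν0, hν1⟩ := hν t
  have hL0 := hL t
  have hN0 : 0 < Nt t := lt_of_lt_of_le hL0 (hN t)
  have hb0 : (0:ℝ) < 1 - β t := by linarith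
  set g := f' t (x t) with hg
  set r : ℝ := μ t / 2 / Nt t with hr
  have hr0 : 0 < r := by positivity
  have hmL2 : 2 * r * L t ≤ 1 := by
    rw [hr]
    rw [show 2 * (μ t / 2 / Nt t) * L t = μ t * (L t / Nt t) by ring]
    have h1 : L t / Nt t ≤ 1 := by rw [div_le_one hN0]; exact hN t
    nlinarith
  -- vector identities
  have hz1 : z (t + 1) - xstar = (z t - xstar) - r • g := by
    rw [hz t, hγ t, ← hg, hr]
    abel
  have hy1 : y (t + 1) - z (t + 1) = (1 - β t) • (y t - z t) - r • g := by
    rw [hy t, hz t, hγ t, ← hg, hx t, hr]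
    module
  have hxd : x t - xstar = (z t - xstar) + (1 - β t) • (y t - z t) := by
    rw [hx t]; module
  -- scalar abbreviations
  set P := ‖z t - xstar‖ ^ 2 with hP'
  set Q := ‖y t - z t‖ ^ 2 with hQ'
  set R := ⟪z t - xstar, y t - z t⟫ with hR'
  set G := ‖g‖ ^ 2 with hG'
  set Id := ⟪z t - xstar, g⟫ with hId'
  set Ic := ⟪y t - z t, g⟫ with hIc'
  have hP : 0 ≤ P := by positivity
  have hQ : 0 ≤ Q := by positivity
  -- norm expansions
  have e1 : ‖(z t - xstar) - r • g‖ ^ 2 = P - 2 * r * Id + r ^ 2 * G := by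
    rw [norm_sub_sq_real, real_inner_smul_right, norm_smul, Real.norm_eq_abs, mul_pow, sq_abs,
      hP', hG', hId']
    ring
  have e2 : ‖(1 - β t) • (y t - z t) - r • g‖ ^ 2
      = (1 - β t) ^ 2 * Q - 2 * r * ((1 - β t) * Ic) + r ^ 2 * G := by
    rw [norm_sub_sq_real, real_inner_smul_right, real_inner_smul_left, norm_smul, norm_smul,
      Real.norm_eq_abs, Real.norm_eq_abs, mul_pow, mul_pow, sq_abs, sq_abs, hQ', hG', hIc']
    ring
  have hXe : ‖x t - xstar‖ ^ 2 = P + 2 * (1 - β t) * R + (1 - β t) ^ 2 * Q := by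
    rw [hxd, norm_add_sq_real, real_inner_smul_right, norm_smul, Real.norm_eq_abs, mul_pow,
      sq_abs, hP', hQ', hR']
    ring
  have hS : ⟪g, x t - xstar⟫ = Id + (1 - β t) * Ic := by
    rw [hxd, inner_add_right, real_inner_smul_right, hId', hIc',
      real_inner_comm g (z t - xstar), real_inner_comm g (y t - z t)]
  -- strong convexity bound
  have hA2 : (f t (x t) - f t xstar) + σ t / 2 * (P + 2 * (1 - β t) * R + (1 - β t) ^ 2 * Q)
      ≤ Id + (1 - β t) * Ic := by
    have h := hstrong t (x t) xstar
    have hsub : xstar - x t = -(x t - xstar) := by abel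
    rw [hsub, inner_neg_right, norm_neg, hXe, hS] at h
    linarith
  -- gradient bound via descent lemma
  have hfpos : 0 ≤ f t (x t) - f t xstar := by linarith [hmin t (x t)]
  have hGb : G ≤ 2 * L t * (f t (x t) - f t xstar) := by
    have hdes := descent_s11 (f t) (f' t) (L t) (hgrad t) (hsmooth t) (x t)
      (x t - (L t)⁻¹ • g)
    have hv : x t - (L t)⁻¹ • g - x t = -((L t)⁻¹ • g) := by abel
    rw [hv, inner_neg_right, real_inner_smul_right, real_inner_self_eq_norm_sq, norm_neg,
      norm_smul, Real.norm_eq_abs, mul_pow, sq_abs, ← hg, ← hG'] at hdes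
    have hminv := hmin t (x t - (L t)⁻¹ • g)
    have hc : (L t)⁻¹ * G - L t / 2 * ((L t)⁻¹ ^ 2 * G) = G / (2 * L t) := by
      field_simp; ring
    have h2 : f t xstar ≤ f t (x t) - G / (2 * L t) := by
      calc f t xstar ≤ f t (x t - (L t)⁻¹ • g) := hminv
        _ ≤ f t (x t) + -((L t)⁻¹ * G) + L t / 2 * ((L t)⁻¹ ^ 2 * G) := hdes
        _ = f t (x t) - G / (2 * L t) := by rw [← hc]; ring
    have h3 : G / (2 * L t) ≤ f t (x t) - f t xstar := by linarith
    rw [div_le_iff₀ (by positivity)] at h3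
    linarith
  -- KEY inequality
  have k1 : 2 * r * ((f t (x t) - f t xstar)
        + σ t / 2 * (P + 2 * (1 - β t) * R + (1 - β t) ^ 2 * Q))
      ≤ 2 * r * (Id + (1 - β t) * Ic) :=
    mul_le_mul_of_nonneg_left hA2 (by positivity)
  have k2 : 2 * r ^ 2 * G ≤ 2 * r ^ 2 * (2 * L t * (f t (x t) - f t xstar)) :=
    mul_le_mul_of_nonneg_left hGb (by positivity)
  have k3 : (2 * r * L t) * (2 * r * (f t (x t) - f t xstar))
      ≤ 1 * (2 * r * (f t (x t) - f t xstar)) :=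
    mul_le_mul_of_nonneg_right hmL2 (mul_nonneg (by positivity) hfpos)
  have hKEY : P + (1 - β t) ^ 2 * Q - 2 * r * Id - 2 * r * ((1 - β t) * Ic) + 2 * r ^ 2 * G
      ≤ P + (1 - β t) ^ 2 * Q
        - (r * σ t) * (P + 2 * (1 - β t) * R + (1 - β t) ^ 2 * Q) := by
    linarith [k1, k2, k3]
  set ρ : ℝ := (μ t / 2) * (σ t / Nt t) with hρ
  have hρ0 : 0 < ρ := by
    rw [hρ]; exact mul_pos (by linarith) (div_pos (hσ t) hN0)
  have hρr : ρ = r * σ t := by rw [hρ, hr]; ring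
  have hsq : 0 ≤ (ρ * (1 - β t) ^ 2) ^ 2 * P
      + 2 * (ρ * (1 - β t) ^ 2) *
          ((1 - β t) * (ρ * (1 - β t) ^ 2 + ν t * (1 - (1 - β t) ^ 2))) * R
      + ((1 - β t) * (ρ * (1 - β t) ^ 2 + ν t * (1 - (1 - β t) ^ 2))) ^ 2 * Q := by
    have h := sq_aux (ρ * (1 - β t) ^ 2)
      ((1 - β t) * (ρ * (1 - β t) ^ 2 + ν t * (1 - (1 - β t) ^ 2)))
      (z t - xstar) (y t - z t)
    rw [← hP', ← hQ', ← hR'] at h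
    exact h
  rw [hz1, hy1]
  have hV : ‖(z t - xstar) - r • g‖ ^ 2 + ‖(1 - β t) • (y t - z t) - r • g‖ ^ 2
      ≤ P + (1 - β t) ^ 2 * Q
        - ρ * (P + 2 * (1 - β t) * R + (1 - β t) ^ 2 * Q) := by
    rw [e1, e2, hρr]
    linarith [hKEY]
  exact endgame ρ (ν t) (1 - β t) P Q R _ hb0 (by linarith) hν0 hρ0 hP hQ hsq hV
end

section
/- Consider the streaming regression problem fₜ(x) = (1 - Dₜᵀx)² on ℝ² with Dₜ = (1,0) for t < τ and Dₜ = (0,1) for t ≥ τ. Then x* = (1,1) is the unique point satisfying fₜ(x*) = 0 = min fₜ for all t, and for any iterative method whose updates satisfy x_{t+1} - x_t ∈ span{∇fₜ(xₜ)} with initial condition x₀ = (0, x₂⁰), the second coordinate of xₜ remains x₂⁰ for all t ≤ τ, so f_τ(x_τ) = (1 - x₂⁰)², independent of τ. -/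
open scoped RealInnerProductSpace

theorem stmt_17 (τ : ℕ) (hτ : 0 < τ)
    (D : ℕ → EuclideanSpace ℝ (Fin 2))
    (hD : ∀ t, D t = if t < τ then EuclideanSpace.single 0 1 else EuclideanSpace.single 1 1)
    (f : ℕ → EuclideanSpace ℝ (Fin 2) → ℝ)
    (hf : ∀ t w, f t w = (1 - ⟪D t, w⟫) ^ 2)
    (xstar : EuclideanSpace ℝ (Fin 2)) (hxstar : ∀ i, xstar i = 1)
    (x : ℕ → EuclideanSpace ℝ (Fin 2))
    (hupd : ∀ t, x (t + 1) - x t ∈ Submodule.span ℝ {(2 * (⟪D t, x t⟫ - 1)) • D t})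
    (hx0 : x 0 0 = 0) :
    (∀ t, f t xstar = 0 ∧ ∀ w, f t xstar ≤ f t w) ∧
      (∀ w : EuclideanSpace ℝ (Fin 2), (∀ t, f t w = 0) → w = xstar) ∧
      (∀ t ≤ τ, x t 1 = x 0 1) ∧
      f τ (x τ) = (1 - x 0 1) ^ 2 := by
  have hinner : ∀ (i : Fin 2) (w : EuclideanSpace ℝ (Fin 2)),
      ⟪(EuclideanSpace.single i (1:ℝ) : EuclideanSpace ℝ (Fin 2)), w⟫ = w i := by
    intro i w
    rw [EuclideanSpace.inner_single_left]
    simp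
  have hDinner : ∀ t w, ⟪D t, w⟫ = if t < τ then w 0 else w 1 := by
    intro t w
    rw [hD t]
    split <;> rw [hinner]
  have hfx : ∀ t w, f t w = (1 - (if t < τ then w 0 else w 1)) ^ 2 := by
    intro t w; rw [hf, hDinner]
  have hmin : ∀ t, f t xstar = 0 ∧ ∀ w, f t xstar ≤ f t w := by
    intro t
    have h0 : f t xstar = 0 := by
      rw [hfx]; split <;> simp [hxstar]
    refine ⟨h0, fun w => ?_⟩
    rw [h0, hfx]; positivity
  have hcoord : ∀ t ≤ τ, x t 1 = x 0 1 := by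
    intro t ht
    induction t with
    | zero => rfl
    | succ n ih =>
      have hn : n < τ := Nat.lt_of_succ_le ht
      have h := hupd n
      rw [Submodule.mem_span_singleton] at h
      obtain ⟨a, ha⟩ := h
      have h1 : (x (n + 1) - x n) 1 = a * ((2 * (⟪D n, x n⟫ - 1)) • D n) 1 := by
        rw [← ha]; rfl
      have hD1 : (D n) 1 = 0 := by
        rw [hD n, if_pos hn]
        simp [EuclideanSpace.single_apply]
      have hs : ((2 * (⟪D n, x n⟫ - 1)) • D n) 1 = 0 := by
        simp [hD1]
      rw [hs, mul_zero] at h1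
      have hsub : (x (n + 1) - x n) 1 = x (n + 1) 1 - x n 1 := rfl
      rw [hsub] at h1
      have := sub_eq_zero.mp h1
      rw [this, ih (le_of_lt hn)]
  refine ⟨hmin, ?_, hcoord, ?_⟩
  · intro w hw
    have h0 : w 0 = 1 := by
      have := hw 0
      rw [hfx, if_pos hτ] at this
      have := pow_eq_zero_iff (n := 2) (by norm_num) |>.mp this
      linarith [sub_eq_zero.mp this]
    have h1 : w 1 = 1 := by
      have := hw τ
      rw [hfx, if_neg (lt_irrefl τ)] at this
      have := pow_eq_zero_iff (n := 2) (by norm_num) |>.mp this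
      linarith [sub_eq_zero.mp this]
    ext i
    fin_cases i <;> simp_all
  · rw [hfx, if_neg (lt_irrefl τ), hcoord τ le_rfl]
end
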